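/- arXiv:1201.6054 — 4 statements merged into one kernel-verified Lean document; each statement's English description precedes it below -/
import Mathlib

section
/- Let u : A₁ × A₂ → ℝ^m be a payoff function on finite action sets, extended bilinearly to mixed actions, and let x ∈ ℝ^m. Suppose there exists δ₀ > 0 such that for every mixed action q of Player 2 there exist a mixed action p of Player 1 and δ ≥ δ₀ with u(p,q) = δx. Suppose also that for every λ ∈ ℝ^m the value of the zero-sum game with payoff ⟨λ, u(·,·)⟩ is nonnegative. Then for every λ ∈ ℝ^m, the value of the zero-sum game with payoff ⟨λ, u(·,·) - δ₀x⟩ is nonnegative. -/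
open scoped RealInnerProductSpace

/-- The bilinear extension of `u` to mixed actions. -/
noncomputable def mixedPayoff {A₁ A₂ : Type*} [Fintype A₁] [Fintype A₂] {m : ℕ}
    (u : A₁ → A₂ → EuclideanSpace ℝ (Fin m)) (p : A₁ → ℝ) (q : A₂ → ℝ) :
    EuclideanSpace ℝ (Fin m) :=
  ∑ a : A₁, ∑ b : A₂, (p a * q b) • u a b

section Aux

variable {A₁ A₂ : Type*} [Fintype A₁] [Fintype A₂]

lemma inner_mixedPayoff {m : ℕ} (u : A₁ → A₂ → EuclideanSpace ℝ (Fin m))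
    (lam : EuclideanSpace ℝ (Fin m)) (p : A₁ → ℝ) (q : A₂ → ℝ) :
    ⟪lam, mixedPayoff u p q⟫ = ∑ a, ∑ b, p a * q b * ⟪lam, u a b⟫ := by
  simp only [mixedPayoff, inner_sum, real_inner_smul_right]

lemma mixed_bound (t : A₁ → A₂ → ℝ) {p : A₁ → ℝ} {q : A₂ → ℝ}
    (hp : p ∈ stdSimplex ℝ A₁) (hq : q ∈ stdSimplex ℝ A₂) :
    |∑ a, ∑ b, p a * q b * t a b| ≤ ∑ a, ∑ b, |t a b| := by
  have hp1 : ∀ a, p a ≤ 1 := by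
    intro a
    have := Finset.single_le_sum (f := p) (fun i _ => hp.1 i) (Finset.mem_univ a)
    simpa [hp.2] using this
  have hq1 : ∀ b, q b ≤ 1 := by
    intro b
    have := Finset.single_le_sum (f := q) (fun i _ => hq.1 i) (Finset.mem_univ b)
    simpa [hq.2] using this
  calc |∑ a, ∑ b, p a * q b * t a b| ≤ ∑ a, |∑ b, p a * q b * t a b| :=
        Finset.abs_sum_le_sum_abs _ _
    _ ≤ ∑ a, ∑ b, |p a * q b * t a b| :=
        Finset.sum_le_sum fun a _ => Finset.abs_sum_le_sum_abs _ _
    _ ≤ ∑ a, ∑ b, |t a b| := by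
        refine Finset.sum_le_sum fun a _ => Finset.sum_le_sum fun b _ => ?_
        rw [abs_mul, abs_mul, abs_of_nonneg (hp.1 a), abs_of_nonneg (hq.1 b)]
        nlinarith [abs_nonneg (t a b), hp.1 a, hq.1 b, hp1 a, hq1 b,
          mul_nonneg (hp.1 a) (hq.1 b), mul_nonneg (hp.1 a) (abs_nonneg (t a b)),
          mul_nonneg (hq.1 b) (abs_nonneg (t a b))]

/-- One direction of the minimax theorem, via separation. -/
lemma minimax_aux [Nonempty A₁] [Nonempty A₂] (g : A₁ → A₂ → ℝ)
    (h : ∀ q ∈ stdSimplex ℝ A₂, ∃ p ∈ stdSimplex ℝ A₁,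
      0 ≤ ∑ a, ∑ b, p a * q b * g a b) :
    ∃ p ∈ stdSimplex ℝ A₁, ∀ b, 0 ≤ ∑ a, p a * g a b := by
  classical
  by_contra hcon
  push_neg at hcon
  set L : (A₁ → ℝ) →ₗ[ℝ] (A₂ → ℝ) :=
    { toFun := fun p b => ∑ a, p a * g a b
      map_add' := by
        intro p₁ p₂; funext b
        simp [add_mul, Finset.sum_add_distrib]
      map_smul' := by
        intro r p; funext b
        simp [Finset.mul_sum, mul_assoc] } with hL
  have hLapp : ∀ p b, L p b = ∑ a, p a * g a b := fun _ _ => rfl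
  set S : Set (A₂ → ℝ) := L '' stdSimplex ℝ A₁ with hS
  set P : Set (A₂ → ℝ) := Set.univ.pi fun _ : A₂ => Set.Ici (0 : ℝ) with hP
  have hLcont : Continuous L := L.continuous_of_finiteDimensional
  have hScomp : IsCompact S := (isCompact_stdSimplex ℝ A₁).image hLcont
  have hSconv : Convex ℝ S := (convex_stdSimplex ℝ A₁).linear_image L
  have hPconv : Convex ℝ P := convex_pi fun _ _ => convex_Ici 0
  have hPclosed : IsClosed P := isClosed_set_pi fun _ _ => isClosed_Ici
  have hdisj : Disjoint S P := by
    rw [Set.disjoint_left]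
    rintro y ⟨p, hp, rfl⟩ hyP
    obtain ⟨b, hb⟩ := hcon p hp
    have : 0 ≤ L p b := hyP b (Set.mem_univ b)
    rw [hLapp] at this
    linarith
  obtain ⟨f, uu, vv, hfu, huv, hfv⟩ :=
    geometric_hahn_banach_compact_closed hSconv hScomp hPconv hPclosed hdisj
  have h0P : (0 : A₂ → ℝ) ∈ P := by
    intro b _; simp
  have hvv : vv < 0 := by simpa using hfv 0 h0P
  have hfP : ∀ y ∈ P, 0 ≤ f y := by
    intro y hy
    by_contra hfy
    push_neg at hfy
    have hcc : 0 < vv / f y := div_pos_of_neg_of_neg hvv hfy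
    have hmem : (vv / f y) • y ∈ P := by
      intro b _
      exact mul_nonneg hcc.le (hy b (Set.mem_univ b))
    have := hfv _ hmem
    rw [map_smul, smul_eq_mul, div_mul_cancel₀ _ (ne_of_lt hfy)] at this
    exact lt_irrefl _ this
  set w : A₂ → ℝ := fun b => f (Pi.single b 1) with hw
  have hwnn : ∀ b, 0 ≤ w b := by
    intro b
    refine hfP _ ?_
    intro b' _
    classical
    rcases eq_or_ne b' b with rfl | hne
    · simp
    · simp [Pi.single_apply, hne]
  have hfeq : ∀ y : A₂ → ℝ, f y = ∑ b, y b * w b := by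
    intro y
    have hy : y = ∑ b, y b • (Pi.single b 1 : A₂ → ℝ) := by
      funext b'
      simp [Pi.single_apply, Finset.sum_apply, mul_ite, Finset.sum_ite_eq']
    conv_lhs => rw [hy]
    rw [map_sum]
    simp [smul_eq_mul]
    rfl
  set Sw : ℝ := ∑ b, w b with hSw
  -- pick a point of S
  obtain ⟨a₀⟩ := ‹Nonempty A₁›
  have hp₀ : (Pi.single a₀ 1 : A₁ → ℝ) ∈ stdSimplex ℝ A₁ := single_mem_stdSimplex ℝ a₀
  have hfLp₀ : f (L (Pi.single a₀ 1)) < uu := hfu _ ⟨_, hp₀, rfl⟩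
  have hSwpos : 0 < Sw := by
    rcases lt_or_eq_of_le (Finset.sum_nonneg fun b _ => hwnn b) with h' | h'
    · exact h'
    have hall : ∀ b, w b = 0 := by
      intro b
      have := (Finset.sum_eq_zero_iff_of_nonneg fun b _ => hwnn b).1 h'.symm b (Finset.mem_univ b)
      exact this
    have : f (L (Pi.single a₀ 1)) = 0 := by
      rw [hfeq]; simp [hall]
    linarith
  set q : A₂ → ℝ := fun b => w b / Sw with hqdef
  have hqmem : q ∈ stdSimplex ℝ A₂ := by
    constructor
    · intro b; exact div_nonneg (hwnn b) hSwpos.le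
    · rw [← Finset.sum_div, ← hSw, div_self hSwpos.ne']
  obtain ⟨p, hp, hpos⟩ := h q hqmem
  have hcalc : ∑ a, ∑ b, p a * q b * g a b = Sw⁻¹ * f (L p) := by
    rw [Finset.sum_comm]
    have : ∀ b, ∑ a, p a * q b * g a b = Sw⁻¹ * (L p b * w b) := by
      intro b
      rw [hLapp p b, Finset.sum_mul, Finset.mul_sum]
      refine Finset.sum_congr rfl fun a _ => ?_
      simp only [hqdef]
      field_simp
    rw [Finset.sum_congr rfl fun b _ => this b, ← Finset.mul_sum, hfeq]
  have hfLp : f (L p) < uu := hfu _ ⟨p, hp, rfl⟩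
  have : Sw⁻¹ * f (L p) < 0 :=
    mul_neg_of_pos_of_neg (inv_pos.2 hSwpos) (by linarith)
  rw [hcalc] at hpos
  linarith

end Aux

/-- Part 3 of the proof of Theorem 2: if condition B3 holds with bound `δ₀` and the
value `v_λ = sup_p inf_q ⟨λ, u(p,q)⟩` is nonnegative for every `λ`, then the value of
the translated game with payoff `⟨λ, u(·,·) - δ₀ x⟩` is nonnegative for every `λ`. -/
theorem stmt5 {A₁ A₂ : Type*} [Fintype A₁] [Fintype A₂] [Nonempty A₁] [Nonempty A₂]
    {m : ℕ} (u : A₁ → A₂ → EuclideanSpace ℝ (Fin m)) (x : EuclideanSpace ℝ (Fin m))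
    (δ₀ : ℝ) (hδ₀ : 0 < δ₀)
    (hB3 : ∀ q ∈ stdSimplex ℝ A₂, ∃ p ∈ stdSimplex ℝ A₁, ∃ δ : ℝ, δ₀ ≤ δ ∧
      mixedPayoff u p q = δ • x)
    (hB2 : ∀ lam : EuclideanSpace ℝ (Fin m),
      0 ≤ ⨆ p : stdSimplex ℝ A₁, ⨅ q : stdSimplex ℝ A₂,
        ⟪lam, mixedPayoff u p.1 q.1⟫) :
    ∀ lam : EuclideanSpace ℝ (Fin m),
      0 ≤ ⨆ p : stdSimplex ℝ A₁, ⨅ q : stdSimplex ℝ A₂,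
        ⟪lam, mixedPayoff u p.1 q.1 - δ₀ • x⟫ := by
  classical
  intro lam
  have hne1 : Nonempty (stdSimplex ℝ A₁) :=
    ⟨⟨_, single_mem_stdSimplex ℝ (Classical.arbitrary A₁)⟩⟩
  have hne2 : Nonempty (stdSimplex ℝ A₂) :=
    ⟨⟨_, single_mem_stdSimplex ℝ (Classical.arbitrary A₂)⟩⟩
  set c : ℝ := ⟪lam, x⟫ with hc
  set g : A₁ → A₂ → ℝ := fun a b => ⟪lam, u a b⟫ - δ₀ * c with hg
  -- key identity
  have hsum1 : ∀ p ∈ stdSimplex ℝ A₁, ∀ q ∈ stdSimplex ℝ A₂,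
      ∑ a, ∑ b, p a * q b * (δ₀ * c) = δ₀ * c := by
    intro p hp q hq
    have : ∑ a, ∑ b, p a * q b * (δ₀ * c)
        = (∑ a, p a) * ∑ b, q b * (δ₀ * c) := by
      rw [Finset.sum_mul]
      refine Finset.sum_congr rfl fun a _ => ?_
      rw [Finset.mul_sum]
      exact Finset.sum_congr rfl fun b _ => by ring
    rw [this, hp.2, one_mul, ← Finset.sum_mul, hq.2, one_mul]
  have key : ∀ p ∈ stdSimplex ℝ A₁, ∀ q ∈ stdSimplex ℝ A₂,
      ⟪lam, mixedPayoff u p q - δ₀ • x⟫ = ∑ a, ∑ b, p a * q b * g a b := by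
    intro p hp q hq
    rw [inner_sub_right, real_inner_smul_right, inner_mixedPayoff, ← hc]
    have : ∑ a, ∑ b, p a * q b * g a b
        = (∑ a, ∑ b, p a * q b * ⟪lam, u a b⟫) - ∑ a, ∑ b, p a * q b * (δ₀ * c) := by
      rw [← Finset.sum_sub_distrib]
      refine Finset.sum_congr rfl fun a _ => ?_
      rw [← Finset.sum_sub_distrib]
      exact Finset.sum_congr rfl fun b _ => by simp [hg]; ring
    rw [this, hsum1 p hp q hq]
  -- a uniform bound
  set B : ℝ := ∑ a, ∑ b, |g a b| with hB
  have hbound : ∀ p ∈ stdSimplex ℝ A₁, ∀ q ∈ stdSimplex ℝ A₂,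
      |⟪lam, mixedPayoff u p q - δ₀ • x⟫| ≤ B := by
    intro p hp q hq
    rw [key p hp q hq]
    exact mixed_bound g hp hq
  -- In both cases we produce a good strategy p
  have main : ∃ p ∈ stdSimplex ℝ A₁, ∀ q ∈ stdSimplex ℝ A₂,
      0 ≤ ∑ a, ∑ b, p a * q b * g a b := by
    rcases le_or_gt 0 c with hcpos | hcneg
    · -- use minimax with B3
      obtain ⟨p, hp, hpb⟩ := minimax_aux g (by
        intro q hq
        obtain ⟨p, hp, δ, hδ, heq⟩ := hB3 q hq
        refine ⟨p, hp, ?_⟩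
        rw [← key p hp q hq, heq]
        rw [inner_sub_right, real_inner_smul_right, real_inner_smul_right, ← hc]
        have : δ * c - δ₀ * c = (δ - δ₀) * c := by ring
        rw [this]
        exact mul_nonneg (by linarith) hcpos)
      refine ⟨p, hp, fun q hq => ?_⟩
      rw [Finset.sum_comm]
      refine Finset.sum_nonneg fun b _ => ?_
      have : ∑ a, p a * q b * g a b = q b * ∑ a, p a * g a b := by
        rw [Finset.mul_sum]
        exact Finset.sum_congr rfl fun a _ => by ring
      rw [this]
      exact mul_nonneg (hq.1 b) (hpb b)
    · -- use B2
      have hBu : ∀ p ∈ stdSimplex ℝ A₁, ∀ q ∈ stdSimplex ℝ A₂,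
          |⟪lam, mixedPayoff u p q⟫| ≤ ∑ a, ∑ b, |(⟪lam, u a b⟫ : ℝ)| := by
        intro p hp q hq
        rw [inner_mixedPayoff]
        exact mixed_bound _ hp hq
      have hlt : δ₀ * c < ⨆ p : stdSimplex ℝ A₁, ⨅ q : stdSimplex ℝ A₂,
          ⟪lam, mixedPayoff u p.1 q.1⟫ :=
        lt_of_lt_of_le (by nlinarith) (hB2 lam)
      obtain ⟨p, hpI⟩ := exists_lt_of_lt_ciSup hlt
      refine ⟨p.1, p.2, fun q hq => ?_⟩
      have hbb : BddBelow (Set.range fun q : stdSimplex ℝ A₂ =>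
          ⟪lam, mixedPayoff u p.1 q.1⟫) := by
        refine ⟨-(∑ a, ∑ b, |(⟪lam, u a b⟫ : ℝ)|), ?_⟩
        rintro _ ⟨q', rfl⟩
        have := hBu p.1 p.2 q'.1 q'.2
        exact neg_le_of_abs_le this
      have hle : (⨅ q : stdSimplex ℝ A₂, ⟪lam, mixedPayoff u p.1 q.1⟫)
          ≤ ⟪lam, mixedPayoff u p.1 q⟫ := ciInf_le hbb ⟨q, hq⟩
      have : δ₀ * c < ⟪lam, mixedPayoff u p.1 q⟫ := lt_of_lt_of_le hpI hle
      rw [← key p.1 p.2 q hq, inner_sub_right, real_inner_smul_right, ← hc]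
      linarith
  obtain ⟨p, hp, hfin⟩ := main
  obtain ⟨b₀⟩ := ‹Nonempty A₂›
  have hq₀ : (Pi.single b₀ 1 : A₂ → ℝ) ∈ stdSimplex ℝ A₂ := single_mem_stdSimplex ℝ b₀
  have hBdd : BddAbove (Set.range fun p' : stdSimplex ℝ A₁ =>
      ⨅ q : stdSimplex ℝ A₂, ⟪lam, mixedPayoff u p'.1 q.1 - δ₀ • x⟫) := by
    refine ⟨B, ?_⟩
    rintro _ ⟨p', rfl⟩
    have hbb : BddBelow (Set.range fun q : stdSimplex ℝ A₂ =>
        ⟪lam, mixedPayoff u p'.1 q.1 - δ₀ • x⟫) := by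
      refine ⟨-B, ?_⟩
      rintro _ ⟨q', rfl⟩
      exact neg_le_of_abs_le (hbound p'.1 p'.2 q'.1 q'.2)
    calc (⨅ q : stdSimplex ℝ A₂, ⟪lam, mixedPayoff u p'.1 q.1 - δ₀ • x⟫)
        ≤ ⟪lam, mixedPayoff u p'.1 (Pi.single b₀ 1) - δ₀ • x⟫ := ciInf_le hbb ⟨_, hq₀⟩
      _ ≤ B := le_of_abs_le (hbound p'.1 p'.2 _ hq₀)
  refine le_ciSup_of_le hBdd ⟨p, hp⟩ (le_ciInf fun q => ?_)
  rw [key p hp q.1 q.2]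
  exact hfin q.1 q.2
end

section
/- Let u : Δ(A₁) × Δ(A₂) → ℝ^m be a bilinear payoff function on products of simplices over finite action sets, and suppose that for every nonzero λ ∈ ℝ^m the value v_λ of the zero-sum game with payoff ⟨λ, u⟩ is strictly positive. Then for every x ∈ ℝ^m there exists δ > 0 such that for every λ ∈ ℝ^m, the value of the zero-sum game with payoff ⟨λ, u(·,·) - δx⟩ is nonnegative. -/
open scoped RealInnerProductSpace

/-- Heart of C2 ⇒ C1 in Theorem 3: if the value `v_λ = sup_p inf_q ⟨λ, u(p,q)⟩`
is strictly positive for every nonzero `λ`, then for every `x` there is `δ > 0`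
such that the value of the game with payoff `⟨λ, u(·,·) - δ x⟩` is nonnegative
for every `λ`. -/
theorem stmt6 {A₁ A₂ : Type*} [Fintype A₁] [Fintype A₂] [Nonempty A₁] [Nonempty A₂]
    {m : ℕ} (u : A₁ → A₂ → EuclideanSpace ℝ (Fin m))
    (hC2 : ∀ lam : EuclideanSpace ℝ (Fin m), lam ≠ 0 →
      0 < ⨆ p : stdSimplex ℝ A₁, ⨅ q : stdSimplex ℝ A₂,
        ⟪lam, mixedPayoff u p.1 q.1⟫) :
    ∀ x : EuclideanSpace ℝ (Fin m), ∃ δ : ℝ, 0 < δ ∧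
      ∀ lam : EuclideanSpace ℝ (Fin m),
        0 ≤ ⨆ p : stdSimplex ℝ A₁, ⨅ q : stdSimplex ℝ A₂,
          ⟪lam, mixedPayoff u p.1 q.1 - δ • x⟫ := by
  classical
  have hne1 : Nonempty (stdSimplex ℝ A₁) :=
    ⟨⟨_, single_mem_stdSimplex ℝ (Classical.arbitrary A₁)⟩⟩
  have hne2 : Nonempty (stdSimplex ℝ A₂) :=
    ⟨⟨_, single_mem_stdSimplex ℝ (Classical.arbitrary A₂)⟩⟩
  -- uniform bound on mixed payoffs
  obtain ⟨M, hM0, hM⟩ : ∃ M : ℝ, 0 ≤ M ∧ ∀ p ∈ stdSimplex ℝ A₁, ∀ q ∈ stdSimplex ℝ A₂,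
      ‖mixedPayoff u p q‖ ≤ M := by
    obtain ⟨M, hM⟩ := (Set.finite_range fun ab : A₁ × A₂ => ‖u ab.1 ab.2‖).bddAbove
    refine ⟨M, le_trans (norm_nonneg _)
      (hM ⟨(Classical.arbitrary A₁, Classical.arbitrary A₂), rfl⟩), ?_⟩
    intro p hp q hq
    calc ‖mixedPayoff u p q‖ ≤ ∑ a : A₁, ∑ b : A₂, ‖(p a * q b) • u a b‖ :=
          (norm_sum_le _ _).trans (Finset.sum_le_sum fun a _ => norm_sum_le _ _)
      _ ≤ ∑ a : A₁, ∑ b : A₂, (p a * q b) * M := by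
          refine Finset.sum_le_sum fun a _ => Finset.sum_le_sum fun b _ => ?_
          rw [norm_smul, Real.norm_eq_abs, abs_of_nonneg (mul_nonneg (hp.1 a) (hq.1 b))]
          exact mul_le_mul_of_nonneg_left (hM ⟨(a, b), rfl⟩)
            (mul_nonneg (hp.1 a) (hq.1 b))
      _ = M := by
          simp_rw [mul_assoc, ← Finset.mul_sum, ← Finset.sum_mul, hq.2, hp.2, one_mul]
  set F : EuclideanSpace ℝ (Fin m) → ℝ := fun lam =>
    ⨆ p : stdSimplex ℝ A₁, ⨅ q : stdSimplex ℝ A₂, ⟪lam, mixedPayoff u p.1 q.1⟫ with hF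
  -- pointwise bound on the inner products
  have hib : ∀ (lam : EuclideanSpace ℝ (Fin m)) (p : stdSimplex ℝ A₁) (q : stdSimplex ℝ A₂),
      |⟪lam, mixedPayoff u p.1 q.1⟫| ≤ ‖lam‖ * M := by
    intro lam p q
    exact (abs_real_inner_le_norm _ _).trans
      (mul_le_mul_of_nonneg_left (hM _ p.2 _ q.2) (norm_nonneg _))
  have hbb : ∀ (lam : EuclideanSpace ℝ (Fin m)) (p : stdSimplex ℝ A₁),
      BddBelow (Set.range fun q : stdSimplex ℝ A₂ => ⟪lam, mixedPayoff u p.1 q.1⟫) := by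
    intro lam p
    exact ⟨-(‖lam‖ * M), by rintro _ ⟨q, rfl⟩; exact neg_le_of_abs_le (hib lam p q)⟩
  have hinf_le : ∀ (lam : EuclideanSpace ℝ (Fin m)) (p : stdSimplex ℝ A₁),
      (⨅ q : stdSimplex ℝ A₂, ⟪lam, mixedPayoff u p.1 q.1⟫) ≤ ‖lam‖ * M := by
    intro lam p
    exact (ciInf_le (hbb lam p) (Classical.arbitrary _)).trans (le_of_abs_le (hib lam p _))
  have hba : ∀ (lam : EuclideanSpace ℝ (Fin m)),
      BddAbove (Set.range fun p : stdSimplex ℝ A₁ =>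
        ⨅ q : stdSimplex ℝ A₂, ⟪lam, mixedPayoff u p.1 q.1⟫) := by
    intro lam
    exact ⟨‖lam‖ * M, by rintro _ ⟨p, rfl⟩; exact hinf_le lam p⟩
  -- Lipschitz-type bound for F
  have hFlip : ∀ lam mu : EuclideanSpace ℝ (Fin m), F lam ≤ F mu + M * ‖lam - mu‖ := by
    intro lam mu
    refine ciSup_le fun p => ?_
    have h1 : (⨅ q : stdSimplex ℝ A₂, ⟪lam, mixedPayoff u p.1 q.1⟫)
        ≤ (⨅ q : stdSimplex ℝ A₂, ⟪mu, mixedPayoff u p.1 q.1⟫) + M * ‖lam - mu‖ := by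
      rw [← sub_le_iff_le_add]
      refine le_ciInf fun q => ?_
      have h2 : (⨅ q : stdSimplex ℝ A₂, ⟪lam, mixedPayoff u p.1 q.1⟫)
          ≤ ⟪lam, mixedPayoff u p.1 q.1⟫ := ciInf_le (hbb lam p) q
      have h3 : ⟪lam, mixedPayoff u p.1 q.1⟫ - ⟪mu, mixedPayoff u p.1 q.1⟫
          ≤ M * ‖lam - mu‖ := by
        have := abs_real_inner_le_norm (lam - mu) (mixedPayoff u p.1 q.1)
        rw [inner_sub_left] at this
        have h4 : ‖lam - mu‖ * ‖mixedPayoff u p.1 q.1‖ ≤ ‖lam - mu‖ * M :=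
          mul_le_mul_of_nonneg_left (hM _ p.2 _ q.2) (norm_nonneg _)
        have := le_of_abs_le this
        nlinarith [norm_nonneg (lam - mu)]
      linarith
    exact h1.trans (add_le_add_left (le_ciSup (hba mu) p) _)
  have hFcont : Continuous F := by
    refine (LipschitzWith.of_dist_le_mul (K := ⟨M, hM0⟩) fun lam mu => ?_).continuous
    rw [Real.dist_eq, abs_sub_le_iff, dist_eq_norm]
    constructor
    · have := hFlip lam mu; show _ ≤ M * ‖lam - mu‖; linarith
    · have := hFlip mu lam; rw [norm_sub_rev] at this; show _ ≤ M * ‖lam - mu‖; linarith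
  -- positive homogeneity
  have hFhom : ∀ (c : ℝ), 0 ≤ c → ∀ lam, F (c • lam) = c * F lam := by
    intro c hc lam
    rw [hF]
    simp only [real_inner_smul_left]
    rw [Real.mul_iSup_of_nonneg hc]
    exact iSup_congr fun p => (Real.mul_iInf_of_nonneg hc _).symm
  -- the trivial zero case
  have hzero : ∀ (δ : ℝ) (x : EuclideanSpace ℝ (Fin m)),
      (0 : ℝ) ≤ ⨆ p : stdSimplex ℝ A₁, ⨅ q : stdSimplex ℝ A₂,
        ⟪(0 : EuclideanSpace ℝ (Fin m)), mixedPayoff u p.1 q.1 - δ • x⟫ := by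
    intro δ x
    simp [ciInf_const, ciSup_const, le_refl]
  intro x
  rcases subsingleton_or_nontrivial (EuclideanSpace ℝ (Fin m)) with hsub | hnt
  · exact ⟨1, one_pos, fun lam => by rw [Subsingleton.elim lam 0]; exact hzero 1 x⟩
  -- minimum of F on the unit sphere
  obtain ⟨lam0, hlam0mem, hmin⟩ := (isCompact_sphere (0 : EuclideanSpace ℝ (Fin m)) 1)
    |>.exists_isMinOn (NormedSpace.sphere_nonempty.mpr zero_le_one) hFcont.continuousOn
  have hlam0norm : ‖lam0‖ = 1 := mem_sphere_zero_iff_norm.mp hlam0mem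
  have hc : 0 < F lam0 := hC2 lam0 (by intro h; rw [h] at hlam0norm; simp at hlam0norm)
  set c : ℝ := F lam0 with hcdef
  refine ⟨c / (2 * (‖x‖ + 1)), by positivity, fun lam => ?_⟩
  set δ : ℝ := c / (2 * (‖x‖ + 1)) with hδ
  have hδpos : 0 < δ := by positivity
  have hδx : δ * ‖x‖ < c := by
    rw [hδ, div_mul_eq_mul_div, div_lt_iff₀ (by positivity)]
    nlinarith [norm_nonneg x, hc]
  by_cases hlam : lam = 0
  · rw [hlam]; exact hzero δ x
  · -- rewrite the goal
    have hn : 0 < ‖lam‖ := norm_pos_iff.mpr hlam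
    set lamhat : EuclideanSpace ℝ (Fin m) := ‖lam‖⁻¹ • lam with hlamhat
    have hhatmem : lamhat ∈ Metric.sphere (0 : EuclideanSpace ℝ (Fin m)) 1 := by
      rw [mem_sphere_zero_iff_norm, hlamhat, norm_smul, norm_inv, norm_norm,
        inv_mul_cancel₀ hn.ne']
    have hFlam : ‖lam‖ * c ≤ F lam := by
      have h1 : c ≤ F lamhat := hmin hhatmem
      have h2 : F lam = ‖lam‖ * F lamhat := by
        rw [hlamhat, ← hFhom ‖lam‖ (norm_nonneg lam) (‖lam‖⁻¹ • lam),
          smul_inv_smul₀ hn.ne']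
      rw [h2]
      exact mul_le_mul_of_nonneg_left h1 hn.le
    set c' : ℝ := δ * ⟪lam, x⟫ with hc'
    have hc'lt : c' < F lam := by
      have h1 : c' ≤ δ * (‖lam‖ * ‖x‖) :=
        mul_le_mul_of_nonneg_left (real_inner_le_norm lam x) hδpos.le
      have h2 : δ * (‖lam‖ * ‖x‖) = ‖lam‖ * (δ * ‖x‖) := by ring
      have h3 : ‖lam‖ * (δ * ‖x‖) < ‖lam‖ * c :=
        mul_lt_mul_of_pos_left hδx hn
      linarith
    obtain ⟨p, hp⟩ := exists_lt_of_lt_ciSup (hc'lt.trans_le le_rfl)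
    have hgoal : ∀ (P : stdSimplex ℝ A₁) (Q : stdSimplex ℝ A₂),
        ⟪lam, mixedPayoff u P.1 Q.1 - δ • x⟫ = ⟪lam, mixedPayoff u P.1 Q.1⟫ - c' := by
      intro P Q
      rw [inner_sub_right, real_inner_smul_right, hc']
    have hbb' : BddBelow (Set.range fun q : stdSimplex ℝ A₂ =>
        ⟪lam, mixedPayoff u p.1 q.1 - δ • x⟫) := by
      refine ⟨-(‖lam‖ * M) - c', ?_⟩
      rintro _ ⟨q, rfl⟩
      dsimp only
      rw [hgoal p q]
      have := neg_le_of_abs_le (hib lam p q)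
      linarith
    have h1 : (0 : ℝ) ≤ ⨅ q : stdSimplex ℝ A₂, ⟪lam, mixedPayoff u p.1 q.1 - δ • x⟫ := by
      refine le_ciInf fun q => ?_
      rw [hgoal p q]
      have := ciInf_le (hbb lam p) q
      linarith
    have hba' : BddAbove (Set.range fun P : stdSimplex ℝ A₁ =>
        ⨅ q : stdSimplex ℝ A₂, ⟪lam, mixedPayoff u P.1 q.1 - δ • x⟫) := by
      refine ⟨‖lam‖ * M + |c'|, ?_⟩
      rintro _ ⟨P, rfl⟩
      have hbbP : BddBelow (Set.range fun q : stdSimplex ℝ A₂ =>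
          ⟪lam, mixedPayoff u P.1 q.1 - δ • x⟫) := by
        refine ⟨-(‖lam‖ * M) - c', ?_⟩
        rintro _ ⟨q, rfl⟩
        dsimp only
        rw [hgoal P q]
        have := neg_le_of_abs_le (hib lam P q)
        linarith
      refine (ciInf_le hbbP (Classical.arbitrary _)).trans ?_
      rw [hgoal P _]
      have := le_of_abs_le (hib lam P (Classical.arbitrary _))
      have := neg_abs_le c'
      linarith
    exact h1.trans (le_ciSup hba' p)
end

section
/- Consider the discrete-time one-dimensional game where Player 1 chooses row U or B, Player 2 chooses column L or R, with payoffs u(U,L) = -3, u(U,R) = -1, u(B,L) = 1, u(B,R) = 3. Let (p^ℓ)_ℓ be any sequence of mixed actions of Player 1, and let Player 2 at stage ℓ play L if p^ℓ(U) ≥ 1/2 and R otherwise. Then the expected stage payoff at stage ℓ has absolute value at least 1/2 and in particular, if the cumulative expected payoff up to stage ℓ lies in [-1/2, 1/2], then the cumulative expected payoff up to stage ℓ+1 lies outside the open interval (-1/2, 1/2). -/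
/-- Example 1: in the discrete-time game with payoffs `u(U,L) = -3`, `u(U,R) = -1`,
`u(B,L) = 1`, `u(B,R) = 3`, if Player 2 plays `L` at stage `ℓ` when `pℓ(U) ≥ 1/2`
and `R` otherwise, then the expected stage payoff has absolute value at least `1/2`,
and whenever the cumulative expected payoff up to stage `ℓ` lies in `[-1/2, 1/2]`,
the cumulative expected payoff up to stage `ℓ+1` lies outside `(-1/2, 1/2)`. -/
theorem stmt9 (p : ℕ → ℝ) (hp : ∀ ℓ, p ℓ ∈ Set.Icc (0 : ℝ) 1)
    (g : ℕ → ℝ)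
    (hg : ∀ ℓ, g ℓ = if (1/2 : ℝ) ≤ p ℓ
      then (-3) * p ℓ + 1 * (1 - p ℓ)
      else (-1) * p ℓ + 3 * (1 - p ℓ)) :
    ∀ ℓ : ℕ,
      (1/2 : ℝ) ≤ |g ℓ| ∧
      ((∑ j ∈ Finset.range ℓ, g j) ∈ Set.Icc (-(1/2) : ℝ) (1/2) →
        (∑ j ∈ Finset.range (ℓ + 1), g j) ∉ Set.Ioo (-(1/2) : ℝ) (1/2)) := by
  have key : ∀ ℓ, (1 : ℝ) ≤ |g ℓ| := by
    intro ℓ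
    rw [hg ℓ]
    rcases le_or_gt (1/2 : ℝ) (p ℓ) with h | h
    · rw [if_pos h, abs_of_nonpos (by linarith)]; linarith
    · rw [if_neg (not_le.mpr h), abs_of_nonneg (by linarith [(hp ℓ).1])]
      linarith
  intro ℓ
  refine ⟨le_trans (by norm_num) (key ℓ), ?_⟩
  intro hIcc hIoo
  rw [Finset.sum_range_succ] at hIoo
  rcases le_or_gt 0 (g ℓ) with h | h
  · have : (1:ℝ) ≤ g ℓ := by have := key ℓ; rwa [abs_of_nonneg h] at this
    have := hIcc.1; have := hIoo.2; linarith
  · have : g ℓ ≤ -1 := by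
      have := key ℓ; rw [abs_of_neg h] at this; linarith
    have := hIcc.2; have := hIoo.1; linarith
end

section
/- Let u : Δ(A₁) × Δ(A₂) → ℝ^m be bilinear over finite action sets, and x ∈ ℝ^m. Suppose there is δ₀ > 0 such that for every q ∈ Δ(A₂) there exist p ∈ Δ(A₁) and δ_q ≥ δ₀ with u(p, q) = δ_q · x. Then for every λ ∈ ℝ^m with ⟨λ, x⟩ ≥ 0, we have max_p min_q ⟨λ, u(p, q)⟩ ≥ δ₀ · ⟨λ, x⟩. -/
open scoped RealInnerProductSpace

/-- Second case in Part 3 of the proof of Theorem 2: if condition B3 holds with bound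
`δ₀` then for every `λ` with `⟨λ, x⟩ ≥ 0`, the value `max_p min_q ⟨λ, u(p,q)⟩` is at
least `δ₀ ⟨λ, x⟩`. -/
theorem stmt15 {A₁ A₂ : Type*} [Fintype A₁] [Fintype A₂] [Nonempty A₁] [Nonempty A₂]
    {m : ℕ} (u : A₁ → A₂ → EuclideanSpace ℝ (Fin m)) (x : EuclideanSpace ℝ (Fin m))
    (δ₀ : ℝ) (hδ₀ : 0 < δ₀)
    (hB3 : ∀ q ∈ stdSimplex ℝ A₂, ∃ p ∈ stdSimplex ℝ A₁, ∃ δq : ℝ, δ₀ ≤ δq ∧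
      mixedPayoff u p q = δq • x) :
    ∀ lam : EuclideanSpace ℝ (Fin m), 0 ≤ ⟪lam, x⟫ →
      δ₀ * ⟪lam, x⟫ ≤ ⨆ p : stdSimplex ℝ A₁, ⨅ q : stdSimplex ℝ A₂,
        ⟪lam, mixedPayoff u p.1 q.1⟫ := by
  classical
  intro lam hlam
  set c : ℝ := δ₀ * ⟪lam, x⟫ with hc
  set M : A₁ → A₂ → ℝ := fun a b => ⟪lam, u a b⟫ with hM
  have payoff : ∀ (p : A₁ → ℝ) (q : A₂ → ℝ),
      ⟪lam, mixedPayoff u p q⟫ = ∑ a : A₁, ∑ b : A₂, p a * q b * M a b := by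
    intro p q
    simp [mixedPayoff, inner_sum, real_inner_smul_right, hM, Finset.mul_sum,
      mul_comm, mul_assoc, mul_left_comm]
  -- nonemptiness of the simplices
  haveI hne1 : Nonempty (stdSimplex ℝ A₁) :=
    ⟨⟨_, ite_eq_mem_stdSimplex ℝ (Classical.arbitrary A₁)⟩⟩
  haveI hne2 : Nonempty (stdSimplex ℝ A₂) :=
    ⟨⟨_, ite_eq_mem_stdSimplex ℝ (Classical.arbitrary A₂)⟩⟩
  -- Key claim (from the minimax argument): some p guarantees c against all pure b.
  obtain ⟨p, hp, hkey⟩ : ∃ p ∈ stdSimplex ℝ A₁, ∀ b : A₂, c ≤ ∑ a : A₁, p a * M a b := by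
    by_contra hcon
    push_neg at hcon
    -- the linear "vector payoff" map into ℝ^{A₂}
    set T : (A₁ → ℝ) →ₗ[ℝ] (A₂ → ℝ) :=
      { toFun := fun p => fun b => ∑ a : A₁, p a * M a b
        map_add' := by
          intro p₁ p₂; funext b; simp [add_mul, Finset.sum_add_distrib]
        map_smul' := by
          intro r p₁; funext b; simp [Finset.mul_sum, mul_assoc] } with hT
    set K : Set (A₂ → ℝ) := T '' stdSimplex ℝ A₁ with hK
    set C : Set (A₂ → ℝ) := {y | ∀ b, c ≤ y b} with hCdef
    have hKconv : Convex ℝ K := (convex_stdSimplex ℝ A₁).linear_image T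
    have hKcomp : IsCompact K :=
      (isCompact_stdSimplex ℝ A₁).image T.continuous_of_finiteDimensional
    have hCconv : Convex ℝ C := by
      intro y hy z hz s t hs ht hst
      intro b
      have h1 : c ≤ y b := hy b
      have h2 : c ≤ z b := hz b
      have : s * c + t * c ≤ s * y b + t * z b :=
        add_le_add (mul_le_mul_of_nonneg_left h1 hs) (mul_le_mul_of_nonneg_left h2 ht)
      simpa [Pi.add_apply, Pi.smul_apply, smul_eq_mul, ← add_mul, hst] using this
    have hCclosed : IsClosed C := by
      have : C = ⋂ b : A₂, {y : A₂ → ℝ | c ≤ y b} := by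
        ext y; simp [hCdef, Set.mem_iInter]
      rw [this]
      exact isClosed_iInter fun b => isClosed_le continuous_const (continuous_apply b)
    have hdisj : Disjoint K C := by
      rw [Set.disjoint_left]
      rintro y ⟨p, hp, rfl⟩ hyC
      obtain ⟨b, hb⟩ := hcon p hp
      exact hb.not_ge (hyC b)
    obtain ⟨φ, s, t, hφK, hst, hφC⟩ :=
      geometric_hahn_banach_compact_closed hKconv hKcomp hCconv hCclosed hdisj
    set q' : A₂ → ℝ := fun b => φ (fun j => if b = j then 1 else 0) with hq'
    have hrep : ∀ y : A₂ → ℝ, φ y = ∑ b : A₂, y b * q' b := by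
      intro y
      conv_lhs => rw [pi_eq_sum_univ y]
      rw [map_sum]
      simp [hq', smul_eq_mul]
    have hconstc : (fun _ : A₂ => c) ∈ C := fun b => le_refl c
    have hφconst : φ (fun _ => c) = c * ∑ b : A₂, q' b := by
      rw [hrep]; rw [Finset.mul_sum]
    have hq'nonneg : ∀ b, 0 ≤ q' b := by
      intro b
      by_contra hneg
      push_neg at hneg
      set t₀ : ℝ := max 0 ((φ (fun _ => c) - t) / (-q' b)) with ht₀
      have ht₀0 : 0 ≤ t₀ := le_max_left _ _
      have hmem : (fun j => c + t₀ * (if b = j then 1 else 0)) ∈ C := by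
        intro j
        have h0 : 0 ≤ t₀ * (if b = j then 1 else 0) := by positivity
        show c ≤ c + t₀ * (if b = j then 1 else 0)
        linarith
      have hval : φ (fun j => c + t₀ * (if b = j then 1 else 0)) =
          φ (fun _ => c) + t₀ * q' b := by
        rw [hrep, hφconst]
        have hterm : ∀ j : A₂, (c + t₀ * (if b = j then 1 else 0)) * q' j
            = c * q' j + (if b = j then t₀ * q' j else 0) := by
          intro j; by_cases h : b = j <;> simp [h] <;> ring
        simp only [hterm]
        rw [Finset.sum_add_distrib, Finset.sum_ite_eq, Finset.mul_sum]
        simp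
      have h1 := hφC _ hmem
      rw [hval] at h1
      have h2 : (φ (fun _ => c) - t) / (-q' b) ≤ t₀ := le_max_right _ _
      have hq : 0 < -q' b := by linarith
      rw [div_le_iff₀ hq] at h2
      nlinarith
    set S : ℝ := ∑ b : A₂, q' b with hS
    have hSnonneg : 0 ≤ S := Finset.sum_nonneg fun b _ => hq'nonneg b
    have hSpos : 0 < S := by
      rcases hSnonneg.lt_or_eq with h | h
      · exact h
      · exfalso
        have hz : ∀ b, q' b = 0 := by
          intro b
          have := (Finset.sum_eq_zero_iff_of_nonneg (fun b _ => hq'nonneg b)).mp h.symm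
          exact this b (Finset.mem_univ b)
        have hφ0 : ∀ y, φ y = 0 := by intro y; rw [hrep]; simp [hz]
        obtain ⟨p₀, hp₀⟩ := hne1
        have h1 := hφK _ ⟨p₀, hp₀, rfl⟩
        have h2 := hφC _ hconstc
        rw [hφ0] at h1; rw [hφ0] at h2
        linarith
    set q : A₂ → ℝ := fun b => q' b / S with hqdef
    have hqmem : q ∈ stdSimplex ℝ A₂ := by
      constructor
      · intro b; exact div_nonneg (hq'nonneg b) hSnonneg
      · rw [← Finset.sum_div]; exact div_self hSpos.ne'
    obtain ⟨p, hpmem, δq, hδq, heq⟩ := hB3 q hqmem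
    have hval : ⟪lam, mixedPayoff u p q⟫ = δq * ⟪lam, x⟫ := by
      rw [heq, real_inner_smul_right]
    have hge : c ≤ ⟪lam, mixedPayoff u p q⟫ := by
      rw [hval, hc]
      exact mul_le_mul_of_nonneg_right hδq hlam
    have hTp : φ (T p) = S * ⟪lam, mixedPayoff u p q⟫ := by
      have key : ∀ b : A₂, T p b * q' b = ∑ a : A₁, S * (p a * q b * M a b) := by
        intro b
        show (∑ a : A₁, p a * M a b) * q' b = _
        rw [Finset.sum_mul]
        apply Finset.sum_congr rfl
        intro a _
        have hSq : S * q b = q' b := by rw [hqdef]; field_simp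
        calc p a * M a b * q' b = (S * q b) * (p a * M a b) := by rw [hSq]; ring
          _ = S * (p a * q b * M a b) := by ring
      rw [hrep, payoff]
      simp only [Finset.mul_sum]
      rw [Finset.sum_comm]
      exact Finset.sum_congr rfl fun b _ => key b
    have h1 := hφK _ ⟨p, hpmem, rfl⟩
    have h2 := hφC _ hconstc
    rw [hTp] at h1
    rw [hφconst] at h2
    have h3 : S * c ≤ S * ⟪lam, mixedPayoff u p q⟫ :=
      mul_le_mul_of_nonneg_left hge hSnonneg
    linarith
  -- Now finish: p guarantees c against every mixed q.
  have hguar : ∀ q ∈ stdSimplex ℝ A₂, c ≤ ⟪lam, mixedPayoff u p q⟫ := by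
    intro q hq
    rw [payoff]
    rw [Finset.sum_comm]
    have : ∀ b : A₂, q b * c ≤ ∑ a : A₁, p a * q b * M a b := by
      intro b
      have h1 : c ≤ ∑ a : A₁, p a * M a b := hkey b
      have h2 : q b * c ≤ q b * ∑ a : A₁, p a * M a b :=
        mul_le_mul_of_nonneg_left h1 (hq.1 b)
      rw [Finset.mul_sum] at h2
      calc q b * c ≤ ∑ a : A₁, q b * (p a * M a b) := h2
        _ = ∑ a : A₁, p a * q b * M a b := by apply Finset.sum_congr rfl; intros; ring
    calc c = ∑ b : A₂, q b * c := by rw [← Finset.sum_mul, hq.2, one_mul]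
      _ ≤ ∑ b : A₂, ∑ a : A₁, p a * q b * M a b := Finset.sum_le_sum fun b _ => this b
  -- a uniform bound for boundedness of the iSup
  set B : ℝ := ∑ a : A₁, ∑ b : A₂, |M a b| with hB
  have habs : ∀ p' ∈ stdSimplex ℝ A₁, ∀ q' ∈ stdSimplex ℝ A₂,
      |⟪lam, mixedPayoff u p' q'⟫| ≤ B := by
    intro p' hp' q' hq'
    rw [payoff]
    calc |∑ a : A₁, ∑ b : A₂, p' a * q' b * M a b|
        ≤ ∑ a : A₁, |∑ b : A₂, p' a * q' b * M a b| := Finset.abs_sum_le_sum_abs _ _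
      _ ≤ ∑ a : A₁, ∑ b : A₂, |p' a * q' b * M a b| :=
          Finset.sum_le_sum fun a _ => Finset.abs_sum_le_sum_abs _ _
      _ ≤ B := by
          rw [hB]
          apply Finset.sum_le_sum; intro a _
          apply Finset.sum_le_sum; intro b _
          rw [abs_mul, abs_mul]
          have hpa := mem_Icc_of_mem_stdSimplex hp' a
          have hqb := mem_Icc_of_mem_stdSimplex hq' b
          rw [abs_of_nonneg hpa.1, abs_of_nonneg hqb.1]
          have h1 : p' a * q' b ≤ 1 := by nlinarith [hpa.1, hpa.2, hqb.1, hqb.2]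
          have h2 : 0 ≤ p' a * q' b := mul_nonneg hpa.1 hqb.1
          nlinarith [abs_nonneg (M a b)]
  have hbddbelow : ∀ p' : stdSimplex ℝ A₁,
      BddBelow (Set.range fun q' : stdSimplex ℝ A₂ => ⟪lam, mixedPayoff u p'.1 q'.1⟫) := by
    rintro p'
    refine ⟨-B, ?_⟩
    rintro _ ⟨q', rfl⟩
    have := habs p'.1 p'.2 q'.1 q'.2
    linarith [neg_abs_le (⟪lam, mixedPayoff u p'.1 q'.1⟫)]
  have hbddabove : BddAbove (Set.range fun p' : stdSimplex ℝ A₁ =>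
      ⨅ q' : stdSimplex ℝ A₂, ⟪lam, mixedPayoff u p'.1 q'.1⟫) := by
    refine ⟨B, ?_⟩
    rintro _ ⟨p', rfl⟩
    obtain ⟨q₀⟩ := hne2
    refine ciInf_le_of_le (hbddbelow p') q₀ ?_
    have := habs p'.1 p'.2 q₀.1 q₀.2
    linarith [le_abs_self (⟪lam, mixedPayoff u p'.1 q₀.1⟫)]
  refine le_ciSup_of_le hbddabove ⟨p, hp⟩ ?_
  exact le_ciInf fun q => hguar q.1 q.2
end
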